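/- Assume the four exponentials conjecture. If r₁, r₂ > 1 are real algebraic numbers with ln r₁ / ln r₂ irrational, and s₁, s₂ are real numbers with e^{i s₁}, e^{i s₂} algebraic, e^{i s₂} not a root of unity, then q₁ π / ln r₁ ≠ |s₂ + q₂ π| / ln r₂ for all nonzero rationals q₁ and all rationals q₂. -/

import Mathlib

open Complex

/-- The four exponentials conjecture: if `x₁, x₂` are `ℚ`-linearly independent complex
numbers and `y₁, y₂` are `ℚ`-linearly independent complex numbers, then at least one of
the numbers `e^{x_i y_j}` is transcendental. -/
def FourExponentialsConjecture : Prop :=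
  ∀ x y : Fin 2 → ℂ, LinearIndependent ℚ x → LinearIndependent ℚ y →
    ∃ i j : Fin 2, Transcendental ℚ (Complex.exp (x i * y j))

private lemma alg_of_pow_eq_one {z : ℂ} {n : ℕ} (hn : 0 < n) (h : z ^ n = 1) :
    IsAlgebraic ℚ z := by
  refine ⟨Polynomial.X ^ n - Polynomial.C 1, Polynomial.X_pow_sub_C_ne_zero hn 1, ?_⟩
  simp [h]

private lemma alg_exp_rat_pi (q : ℚ) :
    IsAlgebraic ℚ (Complex.exp ((q : ℂ) * Real.pi * Complex.I)) := by
  apply alg_of_pow_eq_one (n := 2 * q.den) (by positivity)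
  rw [← Complex.exp_nat_mul]
  have hden : ((q.den : ℚ) * q : ℚ) = (q.num : ℚ) := by
    rw [mul_comm, Rat.mul_den_eq_num]
  have hden' : (q.den : ℂ) * (q : ℂ) = (q.num : ℂ) := by exact_mod_cast hden
  have : ((2 * q.den : ℕ) : ℂ) * ((q : ℂ) * Real.pi * Complex.I)
      = (q.num : ℂ) * (2 * Real.pi * Complex.I) := by
    push_cast
    rw [← hden']
    ring
  rw [this, Complex.exp_int_mul_two_pi_mul_I]

private lemma IsAlgebraic.mul' {a b : ℂ} (ha : IsAlgebraic ℚ a) (hb : IsAlgebraic ℚ b) :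
    IsAlgebraic ℚ (a * b) :=
  (ha.isIntegral.mul hb.isIntegral).isAlgebraic

/-- Assuming the four exponentials conjecture: if `r₁, r₂ > 1` are real algebraic
numbers with `ln r₁ / ln r₂` irrational, and `s₁, s₂` are reals with `e^{is₁}, e^{is₂}`
algebraic and `e^{is₂}` not a root of unity, then `q₁π/ln r₁ ≠ |s₂ + q₂π|/ln r₂` for
all rationals `q₁ ≠ 0` and `q₂`. -/
theorem four_exp_separates (h4e : FourExponentialsConjecture)
    (r₁ r₂ : ℝ) (hr₁ : 1 < r₁) (hr₂ : 1 < r₂)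
    (halg₁ : IsAlgebraic ℚ r₁) (halg₂ : IsAlgebraic ℚ r₂)
    (hirr : Irrational (Real.log r₁ / Real.log r₂))
    (s₁ s₂ : ℝ) (hs₁ : IsAlgebraic ℚ (Complex.exp (s₁ * Complex.I)))
    (hs₂ : IsAlgebraic ℚ (Complex.exp (s₂ * Complex.I)))
    (hnru : ¬∃ n : ℕ, 0 < n ∧ (Complex.exp (s₂ * Complex.I)) ^ n = 1) :
    ∀ q₁ q₂ : ℚ, q₁ ≠ 0 →
      (q₁ : ℝ) * Real.pi / Real.log r₁ ≠ |s₂ + (q₂ : ℝ) * Real.pi| / Real.log r₂ := by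
  intro q₁ q₂ hq₁ heq
  have hL₁ : 0 < Real.log r₁ := Real.log_pos hr₁
  have hL₂ : 0 < Real.log r₂ := Real.log_pos hr₂
  set c : ℝ := Real.log r₂ / Real.log r₁ with hc
  have hcirr : Irrational c := by
    have := hirr.inv
    rwa [inv_div] at this
  set x : Fin 2 → ℂ := ![1, (c : ℂ)] with hxdef
  set y : Fin 2 → ℂ := ![(q₁ : ℂ) * Real.pi * Complex.I, (Real.log r₁ : ℂ)] with hydef
  have hq₁R : (q₁ : ℝ) ≠ 0 := by exact_mod_cast hq₁
  -- linear independence of x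
  have hx : LinearIndependent ℚ x := by
    rw [hxdef]
    rw [LinearIndependent.pair_iff]
    intro s t hst
    rw [Rat.smul_def, Rat.smul_def, mul_one] at hst
    have hre : (s : ℝ) + (t : ℝ) * c = 0 := by
      have := congrArg Complex.re hst
      simpa using this
    have ht : t = 0 := by
      by_contra ht
      have htR : (t : ℝ) ≠ 0 := by exact_mod_cast ht
      have : c = ((-s / t : ℚ) : ℝ) := by
        push_cast
        field_simp at hre ⊢
        linarith
      exact hcirr ⟨-s / t, this.symm⟩
    have hs : s = 0 := by
      rw [ht] at hre
      simpa using hre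
    exact ⟨hs, ht⟩
  -- linear independence of y
  have hy : LinearIndependent ℚ y := by
    rw [hydef, LinearIndependent.pair_iff]
    intro s t hst
    rw [Rat.smul_def, Rat.smul_def] at hst
    have him : (s : ℝ) * ((q₁ : ℝ) * Real.pi) = 0 := by
      have := congrArg Complex.im hst
      simpa using this
    have hre : (t : ℝ) * Real.log r₁ = 0 := by
      have := congrArg Complex.re hst
      simpa using this
    have hs : s = 0 := by
      have := mul_eq_zero.mp him
      rcases this with h | h
      · exact_mod_cast h
      · exact absurd (mul_eq_zero.mp h)
          (by push_neg; exact ⟨hq₁R, Real.pi_ne_zero⟩)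
    have ht : t = 0 := by
      rcases mul_eq_zero.mp hre with h | h
      · exact_mod_cast h
      · exact absurd h hL₁.ne'
    exact ⟨hs, ht⟩
  obtain ⟨i, j, htr⟩ := h4e x y hx hy
  apply htr
  -- the key real identity
  have hkey : c * ((q₁ : ℝ) * Real.pi) = |s₂ + (q₂ : ℝ) * Real.pi| := by
    rw [div_eq_div_iff hL₁.ne' hL₂.ne'] at heq
    rw [hc]
    field_simp
    rw [mul_comm Real.pi (q₂ : ℝ)]
    linarith [heq]
  have halg₁' : IsAlgebraic ℚ ((r₁ : ℂ)) := halg₁.algebraMap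
  have halg₂' : IsAlgebraic ℚ ((r₂ : ℂ)) := halg₂.algebraMap
  -- algebraicity of the four exponentials
  have hA : IsAlgebraic ℚ (Complex.exp (x 0 * y 0)) := by
    simp only [hxdef, hydef, Matrix.cons_val_zero, one_mul]
    exact alg_exp_rat_pi q₁
  have hB : IsAlgebraic ℚ (Complex.exp (x 0 * y 1)) := by
    simp only [hxdef, hydef, Matrix.cons_val_zero, Matrix.cons_val_one, Matrix.head_cons, one_mul]
    rw [← Complex.ofReal_exp, Real.exp_log (by linarith)]
    exact halg₁'
  have hC : IsAlgebraic ℚ (Complex.exp (x 1 * y 1)) := by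
    simp only [hxdef, hydef, Matrix.cons_val_zero, Matrix.cons_val_one, Matrix.head_cons]
    rw [← Complex.ofReal_mul, hc, div_mul_cancel₀ _ hL₁.ne',
      ← Complex.ofReal_exp, Real.exp_log (by linarith)]
    exact halg₂'
  have hsum : IsAlgebraic ℚ (Complex.exp (((s₂ + (q₂ : ℝ) * Real.pi : ℝ) : ℂ) * Complex.I)) := by
    have : ((s₂ + (q₂ : ℝ) * Real.pi : ℝ) : ℂ) * Complex.I
        = (s₂ : ℂ) * Complex.I + (q₂ : ℂ) * Real.pi * Complex.I := by
      push_cast; ring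
    rw [this, Complex.exp_add]
    exact hs₂.mul' (alg_exp_rat_pi q₂)
  have hD : IsAlgebraic ℚ (Complex.exp (x 1 * y 0)) := by
    simp only [hxdef, hydef, Matrix.cons_val_zero, Matrix.cons_val_one, Matrix.head_cons]
    have : (c : ℂ) * ((q₁ : ℂ) * Real.pi * Complex.I)
        = ((|s₂ + (q₂ : ℝ) * Real.pi| : ℝ) : ℂ) * Complex.I := by
      rw [← hkey]; push_cast; ring
    rw [this]
    rcases abs_choice (s₂ + (q₂ : ℝ) * Real.pi) with h | h
    · rw [h]; exact hsum
    · rw [h]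
      have : ((-(s₂ + (q₂ : ℝ) * Real.pi) : ℝ) : ℂ) * Complex.I
          = -(((s₂ + (q₂ : ℝ) * Real.pi : ℝ) : ℂ) * Complex.I) := by push_cast; ring
      rw [this, Complex.exp_neg]
      exact hsum.inv
  fin_cases i <;> fin_cases j <;> assumption
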